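/- Let A be a finite-dimensional G-graded algebra over an algebraically closed field F of characteristic zero, with semisimple part \bar{A} (so A = \bar{A} \oplus J(A) as G-graded vector spaces), nilpotency index n_A of J(A), and d_g = dim_F(\bar{A}_g) for each g \in G. If a multilinear G-graded polynomial f has, for some g \in G, at least n_A disjoint alternating sets of g-homogeneous variables, each of cardinality d_g + 1, then f is a G-graded identity of A. -/

import Mathlib

/-- From a list with at least `m` entries satisfying `p` (hence in `S`), extract a
prefix-absorbed product: `l.prod = zs.prod * a` with `zs` a list of `m` elements of `S`. -/
lemma aux_absorb {A : Type*} [Ring A] (S : Set A)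
    (hlmul : ∀ a x, x ∈ S → a * x ∈ S) (p : A → Bool) (hp : ∀ x, p x = true → x ∈ S) :
    ∀ (l : List A) (m : ℕ), m ≤ l.countP p →
      ∃ (zs : List A) (a : A), zs.length = m ∧ (∀ z ∈ zs, z ∈ S) ∧ l.prod = zs.prod * a := by
  intro l
  induction l with
  | nil =>
    intro m hm
    simp only [List.countP_nil, Nat.le_zero] at hm
    subst hm
    exact ⟨[], 1, rfl, by simp, by simp⟩
  | cons x t ih =>
    intro m hm
    rcases m with _ | m
    · exact ⟨[], (x :: t).prod, rfl, by simp, by simp⟩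
    rw [List.countP_cons] at hm
    by_cases hpx : p x = true
    · simp only [hpx, if_true] at hm
      obtain ⟨zs, a, hlen, hmem, hprod⟩ := ih m (by omega)
      refine ⟨x :: zs, a, by simp [hlen], ?_, ?_⟩
      · intro z hz
        rcases List.mem_cons.mp hz with h | h
        · exact h ▸ hp x hpx
        · exact hmem z h
      · simp [List.prod_cons, hprod, mul_assoc]
    · rw [if_neg hpx, Nat.add_zero] at hm
      obtain ⟨zs, a, hlen, hmem, hprod⟩ := ih (m + 1) (by omega)
      rcases zs with _ | ⟨z, rest⟩
      · simp at hlen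
      refine ⟨(x * z) :: rest, a, by simpa using hlen, ?_, ?_⟩
      · intro y hy
        rcases List.mem_cons.mp hy with h | h
        · exact h ▸ hlmul x z (hmem z (by simp))
        · exact hmem y (by simp [h])
      · simp only [List.prod_cons] at hprod ⊢
        rw [hprod]
        simp [mul_assoc]

/-- If a list has at least `nA` entries in `S` and products of `nA` elements of `S`
vanish, the whole product vanishes. -/
lemma aux_prod_zero {A : Type*} [Ring A] (S : Set A)
    (hlmul : ∀ a x, x ∈ S → a * x ∈ S) (p : A → Bool) (hp : ∀ x, p x = true → x ∈ S)
    (nA : ℕ) (hnil : ∀ z : Fin nA → A, (∀ i, z i ∈ S) → (List.ofFn z).prod = 0)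
    (l : List A) (hc : nA ≤ l.countP p) : l.prod = 0 := by
  obtain ⟨zs, a, hlen, hmem, hprod⟩ := aux_absorb S hlmul p hp l nA hc
  subst hlen
  have hz : zs.prod = 0 := by
    have := hnil zs.get (fun i => hmem _ (zs.get_mem i))
    rwa [List.ofFn_get] at this
  rw [hprod, hz, zero_mul]

lemma aux_countP_ofFn {α : Type*} (p : α → Bool) :
    ∀ (n : ℕ) (f : Fin n → α),
      (Finset.univ.filter fun i => p (f i) = true).card ≤ (List.ofFn f).countP p := by
  intro n
  induction n with
  | zero => intro f; simp
  | succ n ih =>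
    intro f
    rw [List.ofFn_succ, List.countP_cons]
    have h1 : (Finset.univ.filter fun i : Fin (n+1) => p (f i) = true).card ≤
        (Finset.univ.filter fun i : Fin n => p (f i.succ) = true).card
          + (if p (f 0) = true then 1 else 0) := by
      classical
      rw [Finset.card_filter, Finset.card_filter, Fin.sum_univ_succ]
      simp [add_comm]
    calc _ ≤ _ := h1
      _ ≤ _ := by
        have := ih (fun i => f i.succ)
        by_cases h0 : p (f 0) = true <;> simp [h0] <;> omega


open scoped BigOperators DirectSum

/-- Let `A` be a finite-dimensional `G`-graded algebra over an
algebraically closed field `F` of characteristic zero, with graded semisimple part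
given by components `Sb g ≤ 𝒜 g` (so `𝒜 g = Sb g ⊕ (J ⊓ 𝒜 g)` for each `g`), the
radical `J` a graded ideal with `J^{n_A} = 0`, and `d = dim_F (Sb g)`.  A multilinear
`G`-graded polynomial (represented by coefficients `c w`) having at least `n_A`
disjoint alternating sets of `g`-homogeneous variables, each of cardinality `d + 1`,
is a `G`-graded identity of `A`: every admissible evaluation vanishes. -/
theorem stmt_3 {F : Type*} [Field F] [CharZero F] [IsAlgClosed F]
    {G : Type*} [Group G] [Finite G] [DecidableEq G]
    {A : Type*} [Ring A] [Algebra F A] [FiniteDimensional F A]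
    (𝒜 : G → Submodule F A) [DirectSum.Decomposition 𝒜]
    (hmul : ∀ g h : G, ∀ a ∈ 𝒜 g, ∀ b ∈ 𝒜 h, a * b ∈ 𝒜 (g * h))
    (Sb : G → Submodule F A) (hSle : ∀ g, Sb g ≤ 𝒜 g)
    (J : Submodule F A)
    (hJl : ∀ a : A, ∀ x ∈ J, a * x ∈ J)
    (hJr : ∀ a : A, ∀ x ∈ J, x * a ∈ J)
    (hJgr : ∀ x ∈ J, ∀ g : G, ((DirectSum.decompose 𝒜 x) g : A) ∈ J)
    (hsplit : ∀ g, 𝒜 g ≤ Sb g ⊔ J) (hdisj : ∀ g, Disjoint (Sb g) J)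
    (nA : ℕ) (hnil : ∀ z : Fin nA → A, (∀ i, z i ∈ J) → (List.ofFn z).prod = 0)
    (g : G) (d : ℕ) (hd : Module.finrank F (Sb g) = d)
    (r k : ℕ) (hr : nA ≤ r)
    (γ : Fin k → G)
    (c : (Fin (r * (d + 1) + k) ≃ (Fin r × Fin (d + 1)) ⊕ Fin k) → F)
    (halt : ∀ (w : Fin (r * (d + 1) + k) ≃ (Fin r × Fin (d + 1)) ⊕ Fin k)
        (t : Fin r) (i j : Fin (d + 1)), i ≠ j →
      c (w.trans (Equiv.swap (Sum.inl (t, i)) (Sum.inl (t, j)))) = - c w)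
    (v : (Fin r × Fin (d + 1)) ⊕ Fin k → A)
    (hvx : ∀ t i, v (Sum.inl (t, i)) ∈ 𝒜 g)
    (hvy : ∀ i, v (Sum.inr i) ∈ 𝒜 (γ i)) :
    ∑ w : Fin (r * (d + 1) + k) ≃ (Fin r × Fin (d + 1)) ⊕ Fin k,
      c w • (List.ofFn fun p => v (w p)).prod = 0 := by
  classical
  set T : MultilinearMap F (fun _ : (Fin r × Fin (d + 1)) ⊕ Fin k => A) A :=
    ∑ w : Fin (r * (d + 1) + k) ≃ (Fin r × Fin (d + 1)) ⊕ Fin k,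
      c w • (MultilinearMap.mkPiAlgebraFin F (r * (d + 1) + k) A).domDomCongr w
    with hTdef
  have hT : ∀ m : (Fin r × Fin (d + 1)) ⊕ Fin k → A,
      T m = ∑ w : Fin (r * (d + 1) + k) ≃ (Fin r × Fin (d + 1)) ⊕ Fin k,
        c w • (List.ofFn fun p => m (w p)).prod := by
    intro m
    rw [hTdef, MultilinearMap.sum_apply]
    refine Finset.sum_congr rfl fun w _ => ?_
    rw [MultilinearMap.smul_apply, MultilinearMap.domDomCongr_apply,
      MultilinearMap.mkPiAlgebraFin_apply]
  -- decompose the `x`-values into semisimple and radical parts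
  have hdec : ∀ p : Fin r × Fin (d + 1),
      ∃ sp ∈ Sb g, ∃ np ∈ J, sp + np = v (Sum.inl p) := by
    intro p
    have h1 : v (Sum.inl p) ∈ Sb g ⊔ J := hsplit g (by simpa using hvx p.1 p.2)
    exact Submodule.mem_sup.mp h1
  choose s hs n hn hsn using hdec
  -- expand multilinearly
  set h : (Fin r × Fin (d + 1)) ⊕ Fin k → Bool → A :=
    fun u b => Sum.elim (fun q => if b then s q else n q)
      (fun j => if b then v (Sum.inr j) else 0) u with hhdef
  have hv' : v = fun u => ∑ b : Bool, h u b := by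
    funext u
    rcases u with q | j
    · simp [hhdef, Fintype.sum_bool, hsn q]
    · simp [hhdef, Fintype.sum_bool]
  rw [← hT v, hv', T.map_sum]
  refine Finset.sum_eq_zero fun ρ _ => ?_
  by_cases hky : ∀ i : Fin k, ρ (Sum.inr i) = true
  case neg =>
    push_neg at hky
    obtain ⟨i0, hi0⟩ := hky
    refine T.map_coord_zero (Sum.inr i0) ?_
    simp only [hhdef, Sum.elim_inr]
    rw [if_neg (by simpa using hi0)]
  case pos =>
  by_cases hA : ∃ t : Fin r, ∀ i : Fin (d + 1), ρ (Sum.inl (t, i)) = true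
  case neg =>
    -- radical case: each alternating set contains a radical element
    push_neg at hA
    have hA' : ∀ t : Fin r, ∃ i : Fin (d + 1), ρ (Sum.inl (t, i)) = false := by
      intro t
      obtain ⟨i, hi⟩ := hA t
      exact ⟨i, by simpa using hi⟩
    choose iT hiT using hA'
    rw [hT]
    refine Finset.sum_eq_zero fun w _ => ?_
    have hz : (List.ofFn fun p => h (w p) (ρ (w p))).prod = 0 := by
      refine aux_prod_zero (J : Set A) (fun a x hx => hJl a x hx)
        (fun x => decide (x ∈ J)) (fun x hx => of_decide_eq_true hx) nA hnil _ ?_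
      refine le_trans ?_ (aux_countP_ofFn _ _ _)
      have hinj : Function.Injective
          (fun t : Fin r => w.symm (Sum.inl (t, iT t))) := by
        intro a b hab
        have := w.symm.injective hab
        have := Sum.inl_injective this
        exact (Prod.mk.injEq _ _ _ _).mp this |>.1
      have hsub : Finset.univ.image (fun t : Fin r => w.symm (Sum.inl (t, iT t))) ⊆
          Finset.univ.filter
            (fun q => decide (h (w q) (ρ (w q)) ∈ J) = true) := by
        intro q hq
        simp only [Finset.mem_image, Finset.mem_univ, true_and] at hq
        obtain ⟨t, rfl⟩ := hq
        simp only [Finset.mem_filter, Finset.mem_univ, true_and,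
          Equiv.apply_symm_apply, decide_eq_true_eq]
        rw [hhdef]
        simp only [Sum.elim_inl]
        rw [if_neg (by simp [hiT t])]
        exact hn (t, iT t)
      calc nA ≤ r := hr
        _ = (Finset.univ.image (fun t : Fin r => w.symm (Sum.inl (t, iT t)))).card := by
            rw [Finset.card_image_of_injective _ hinj, Finset.card_univ, Fintype.card_fin]
        _ ≤ _ := Finset.card_le_card hsub
    rw [hz, smul_zero]
  case pos =>
    -- semisimple case: an alternating set evaluated entirely in `Sb g`
    obtain ⟨t, ht⟩ := hA
    set m : (Fin r × Fin (d + 1)) ⊕ Fin k → A := fun u => h u (ρ u) with hmdef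
    set emb : (Fin (d + 1) → A) → ((Fin r × Fin (d + 1)) ⊕ Fin k → A) :=
      fun a => Sum.elim
        (fun q : Fin r × Fin (d + 1) => if q.1 = t then a q.2 else m (Sum.inl q))
        (fun j => m (Sum.inr j)) with hembdef
    have emb_update : ∀ (inst : DecidableEq (Fin (d + 1))) (a : Fin (d + 1) → A)
        (i : Fin (d + 1)) (z : A),
        emb (@Function.update _ _ inst a i z)
          = Function.update (emb a) (Sum.inl (t, i)) z := by
      intro inst a i z
      funext u
      rcases u with ⟨q1, q2⟩ | j
      · by_cases h1 : q1 = t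
        · subst h1
          by_cases h2 : q2 = i
          · subst h2
            simp [hembdef, Function.update]
          · simp [hembdef, Function.update, h2]
        · simp [hembdef, Function.update, h1, fun hh : q1 = t => h1 hh]
      · simp [hembdef, Function.update]
    have hzero2 : ∀ S0 : A, S0 = -S0 → S0 = 0 := by
      intro S0 hS0
      have h2 : S0 + S0 = 0 := by nth_rewrite 1 [hS0]; exact neg_add_cancel S0
      have h3 : (2 : F) • S0 = 0 := by rw [two_smul]; exact h2
      rcases smul_eq_zero.mp h3 with h4 | h4
      · exact absurd h4 two_ne_zero
      · exact h4
    have hkey : ∀ (a : Fin (d + 1) → A) (i j : Fin (d + 1)),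
        a i = a j → i ≠ j → T (emb a) = 0 := by
      intro a i j hij hne
      set σ : ((Fin r × Fin (d + 1)) ⊕ Fin k) ≃ ((Fin r × Fin (d + 1)) ⊕ Fin k) :=
        Equiv.swap (Sum.inl (t, i)) (Sum.inl (t, j)) with hσdef
      have hσcomp : ∀ u, emb a (σ u) = emb a u := by
        intro u
        rcases eq_or_ne u (Sum.inl (t, i)) with rfl | h1
        · rw [hσdef, Equiv.swap_apply_left]
          simp [hembdef, hij.symm]
        rcases eq_or_ne u (Sum.inl (t, j)) with rfl | h2
        · rw [hσdef, Equiv.swap_apply_right]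
          simp [hembdef, hij]
        · rw [hσdef, Equiv.swap_apply_of_ne_of_ne h1 h2]
      have hbij : Function.Bijective
          (fun w : Fin (r * (d + 1) + k) ≃ (Fin r × Fin (d + 1)) ⊕ Fin k =>
            w.trans σ) := by
        have hinv : ∀ w : Fin (r * (d + 1) + k) ≃ (Fin r × Fin (d + 1)) ⊕ Fin k,
            (w.trans σ).trans σ = w := by
          intro w
          ext x
          simp [hσdef, Equiv.swap_apply_self]
        exact Function.Involutive.bijective hinv
      have hstep : T (emb a) = - T (emb a) := by
        nth_rewrite 1 [hT (emb a)]
        rw [Fintype.sum_bijective _ hbij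
          (fun w => c (w.trans σ) • (List.ofFn fun p => emb a ((w.trans σ) p)).prod)
          (fun w => c w • (List.ofFn fun p => emb a (w p)).prod)
          (fun w => rfl) |>.symm]
        rw [hT (emb a), ← Finset.sum_neg_distrib]
        refine Finset.sum_congr rfl fun w _ => ?_
        have h1 : c (w.trans σ) = - c w := halt w t i j hne
        have h2 : (List.ofFn fun p => emb a ((w.trans σ) p)).prod
            = (List.ofFn fun p => emb a (w p)).prod := by
          have he : (fun p : Fin (r * (d + 1) + k) => emb a ((w.trans σ) p))
              = fun p => emb a (w p) := by
            funext p
            rw [Equiv.trans_apply]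
            exact hσcomp (w p)
          rw [he]
        rw [h1, h2, neg_smul]
      exact hzero2 _ hstep
    have hFD : FiniteDimensional F (Sb g) := inferInstance
    let Φml : MultilinearMap F (fun _ : Fin (d + 1) => A) A :=
      { toFun := fun a => T (emb a)
        map_update_add' := by
          intro inst a i x y
          try dsimp only
          rw [emb_update inst, emb_update inst, emb_update inst]
          exact T.map_update_add _ _ _ _
        map_update_smul' := by
          intro inst a i r0 x
          try dsimp only
          rw [emb_update inst, emb_update inst]
          exact T.map_update_smul _ _ _ _ }
    let Φ : A [⋀^Fin (d + 1)]→ₗ[F] A :=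
      { Φml with map_eq_zero_of_eq' := fun a i j hij hne => by exact hkey a i j hij hne }
    have hΦapp : ∀ a0 : Fin (d + 1) → A, Φ a0 = T (emb a0) := fun a0 => by exact rfl
    have hdep : ¬ LinearIndependent F
        (fun i : Fin (d + 1) => (⟨s (t, i), hs (t, i)⟩ : Sb g)) := by
      intro hli
      have hcard := hli.fintype_card_le_finrank
      rw [hd, Fintype.card_fin] at hcard
      omega
    have h0 := (Φ.compLinearMap (Sb g).subtype).map_linearDependent _ hdep
    rw [AlternatingMap.compLinearMap_apply] at h0
    have hme : emb (fun i => ((Sb g).subtype ⟨s (t, i), hs (t, i)⟩ : A)) = m := by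
      funext u
      rcases u with ⟨q1, q2⟩ | j
      · by_cases h1 : q1 = t
        · subst h1
          simp only [hembdef, Sum.elim_inl, if_pos rfl, Submodule.coe_subtype]
          rw [hmdef, hhdef]
          simp only [Sum.elim_inl]
          rw [ht q2]
          simp
        · simp [hembdef, h1]
      · simp [hembdef]
    rw [hΦapp] at h0
    have hfin : T (emb (fun i => ((Sb g).subtype ⟨s (t, i), hs (t, i)⟩ : A))) = 0 := h0
    rw [hme] at hfin
    exact hfin
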